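/- arXiv:2410.02738 — 2 statements merged into one kernel-verified Lean document; each statement's English description precedes it below -/
import Mathlib

section
/- For every complex number q with |q| < 1, the following identity holds: Σ_{n≥0} q^{2n} · (q^{4n+4}; q^4)_∞ · (q; q)_{2n+1} = 2(1−q)(q^4; q^4)_∞/(1+q^3) − (q; q)_∞/(1+q^3). -/
/-- The finite q-Pochhammer symbol `(a; q)_n = ∏_{j=0}^{n-1} (1 - a q^j)`. -/
noncomputable def qPoch (a q : ℂ) (n : ℕ) : ℂ := ∏ j ∈ Finset.range n, (1 - a * q ^ j)

/-- The infinite q-Pochhammer symbol `(a; q)_∞ = ∏_{j=0}^{∞} (1 - a q^j)`. -/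
noncomputable def qPochInf (a q : ℂ) : ℂ := ∏' j : ℕ, (1 - a * q ^ j)

open Filter Topology Finset

lemma qfactor_ne {a q : ℂ} (ha : ‖a‖ < 1) (hq : ‖q‖ ≤ 1) (j : ℕ) : 1 - a * q ^ j ≠ 0 := by
  have h : ‖a * q ^ j‖ < 1 := by
    rw [norm_mul, norm_pow]
    calc ‖a‖ * ‖q‖ ^ j ≤ ‖a‖ * 1 := by
          exact mul_le_mul_of_nonneg_left (pow_le_one₀ (norm_nonneg q) hq) (norm_nonneg a)
      _ < 1 := by simpa using ha
  intro h0
  have : a * q ^ j = 1 := by linear_combination -h0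
  rw [this, norm_one] at h
  exact lt_irrefl _ h

lemma qsummable_log {a q : ℂ} (ha : ‖a‖ < 1) (hq : ‖q‖ < 1) :
    Summable fun j : ℕ => Complex.log (1 - a * q ^ j) := by
  have hg : Summable fun j : ℕ => (3 / 2 : ℝ) * ‖q‖ ^ j :=
    (summable_geometric_of_lt_one (norm_nonneg q) hq).mul_left _
  refine Summable.of_norm_bounded_eventually hg ?_
  rw [Nat.cofinite_eq_atTop]
  have h0 : Tendsto (fun j : ℕ => ‖a * q ^ j‖) atTop (𝓝 0) := by
    have := tendsto_pow_atTop_nhds_zero_of_norm_lt_one hq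
    simpa using ((this.norm).const_mul ‖a‖).congr (fun j => by simp [norm_mul, norm_pow])
  filter_upwards [h0.eventually_le_const (by norm_num : (0:ℝ) < 1/2)] with j hj
  have h1 : (1 : ℂ) - a * q ^ j = 1 + (-(a * q ^ j)) := by ring
  rw [h1]
  calc ‖Complex.log (1 + -(a * q ^ j))‖ ≤ 3 / 2 * ‖-(a * q ^ j)‖ :=
        Complex.norm_log_one_add_half_le_self (by simpa using hj)
    _ ≤ 3 / 2 * ‖q‖ ^ j := by
        rw [norm_neg, norm_mul, norm_pow]
        have : ‖a‖ * ‖q‖ ^ j ≤ 1 * ‖q‖ ^ j :=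
          mul_le_mul_of_nonneg_right ha.le (pow_nonneg (norm_nonneg q) j)
        nlinarith [pow_nonneg (norm_nonneg q) j]

lemma qmultipliable {a q : ℂ} (ha : ‖a‖ < 1) (hq : ‖q‖ < 1) :
    Multipliable fun j : ℕ => 1 - a * q ^ j :=
  Complex.multipliable_of_summable_log (qsummable_log ha hq)

lemma qPochInf_ne_zero {a q : ℂ} (ha : ‖a‖ < 1) (hq : ‖q‖ < 1) : qPochInf a q ≠ 0 := by
  have h2 := Complex.cexp_tsum_eq_tprod (f := fun j => 1 - a * q ^ j)
    (fun j => qfactor_ne ha hq.le j) (qsummable_log ha hq)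
  rw [qPochInf, ← h2]
  exact Complex.exp_ne_zero _

lemma qnormpow {q : ℂ} (hq1 : ‖q‖ < 1) (k : ℕ) (hk : k ≠ 0) : ‖q ^ k‖ < 1 := by
  rw [norm_pow]; exact pow_lt_one₀ (norm_nonneg q) hq1 hk

lemma qtail {q : ℂ} (hq1 : ‖q‖ < 1) (n : ℕ) :
    qPochInf (q ^ (4 * n + 4)) (q ^ 4)
      = (1 - q ^ (4 * n + 4)) * qPochInf (q ^ (4 * n + 8)) (q ^ 4) := by
  have hfe : (fun j : ℕ => 1 - q ^ (4 * n + 4) * (q ^ 4) ^ (j + 1))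
      = fun j : ℕ => 1 - q ^ (4 * n + 8) * (q ^ 4) ^ j := funext fun j => by ring
  have hm : Multipliable fun j : ℕ => 1 - q ^ (4 * n + 4) * (q ^ 4) ^ (j + 1) := by
    rw [hfe]; exact qmultipliable (qnormpow hq1 _ (by omega)) (qnormpow hq1 4 (by omega))
  have h := tprod_eq_zero_mul' (f := fun j : ℕ => 1 - q ^ (4 * n + 4) * (q ^ 4) ^ j) hm
  rw [hfe] at h
  simp only [qPochInf]
  rw [h]
  simp only [pow_zero, mul_one]

lemma qrepr {q : ℂ} (hq1 : ‖q‖ < 1) (n : ℕ) :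
    (∏ j ∈ Finset.range n, (1 - q ^ 4 * (q ^ 4) ^ j)) * qPochInf (q ^ (4 * n + 4)) (q ^ 4)
      = qPochInf (q ^ 4) (q ^ 4) := by
  have hfe : (fun j : ℕ => 1 - q ^ 4 * (q ^ 4) ^ (j + n))
      = fun j : ℕ => 1 - q ^ (4 * n + 4) * (q ^ 4) ^ j := funext fun j => by ring
  have hm : Multipliable fun j : ℕ => 1 - q ^ 4 * (q ^ 4) ^ (j + n) := by
    rw [hfe]; exact qmultipliable (qnormpow hq1 _ (by omega)) (qnormpow hq1 4 (by omega))
  have h := Multipliable.prod_mul_tprod_nat_mul' (f := fun j : ℕ => 1 - q ^ 4 * (q ^ 4) ^ j) (k := n) hm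
  rw [hfe] at h
  simp only [qPochInf]
  exact h

lemma qpoch_step (q : ℂ) (n : ℕ) :
    qPoch q q (2 * n + 3)
      = qPoch q q (2 * n + 1) * (1 - q * q ^ (2 * n + 1)) * (1 - q * q ^ (2 * n + 2)) := by
  simp only [qPoch]
  rw [show 2 * n + 3 = (2 * n + 2) + 1 from rfl, Finset.prod_range_succ,
    show 2 * n + 2 = (2 * n + 1) + 1 from rfl, Finset.prod_range_succ]

lemma key_poly (q P R : ℂ) (n : ℕ) :
    (1 + q ^ 3) * (q ^ (2 * n) * ((1 - q ^ (4 * n + 4)) * P) * R)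
      = (1 + q ^ (2 * n)) * ((1 - q ^ (4 * n + 4)) * P * R)
        - (1 + q ^ (2 * n + 2)) *
          (P * (R * (1 - q * q ^ (2 * n + 1)) * (1 - q * q ^ (2 * n + 2)))) := by
  ring


set_option maxHeartbeats 1000000 in
theorem stmt_2 (q : ℂ) (hq : ‖q‖ < 1) :
    ∑' n : ℕ, q ^ (2 * n) * qPochInf (q ^ (4 * n + 4)) (q ^ 4) * qPoch q q (2 * n + 1) =
      2 * (1 - q) * qPochInf (q ^ 4) (q ^ 4) / (1 + q ^ 3) - qPochInf q q / (1 + q ^ 3) := by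
  have hq1 : ‖q‖ < 1 := hq
  have h3 : (1 : ℂ) + q ^ 3 ≠ 0 := by
    intro h
    have h' : q ^ 3 = -1 := by linear_combination h
    have h'' := congrArg Norm.norm h'
    rw [norm_pow, norm_neg, norm_one] at h''
    have := pow_lt_one₀ (norm_nonneg q) hq1 (three_ne_zero)
    rw [h''] at this; exact lt_irrefl _ this
  set L : ℂ := qPochInf q q with hL
  set A : ℂ := qPochInf (q ^ 4) (q ^ 4) with hA
  set f : ℕ → ℂ :=
    fun n => q ^ (2 * n) * qPochInf (q ^ (4 * n + 4)) (q ^ 4) * qPoch q q (2 * n + 1) with hf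
  set F : ℕ → ℂ :=
    fun n => (1 + q ^ (2 * n)) * (qPochInf (q ^ (4 * n + 4)) (q ^ 4) * qPoch q q (2 * n + 1))
    with hF
  -- telescoping identity
  have key : ∀ n : ℕ, (1 + q ^ 3) * f n = F n - F (n + 1) := by
    intro n
    have e1 : 4 * (n + 1) + 4 = 4 * n + 8 := by ring
    have e2 : 2 * (n + 1) + 1 = 2 * n + 3 := by ring
    have e3 : 2 * (n + 1) = 2 * n + 2 := by ring
    simp only [hf, hF, e1, e2, e3, qtail hq1 n, qpoch_step q n]
    exact key_poly q (qPochInf (q ^ (4 * n + 8)) (q ^ 4)) (qPoch q q (2 * n + 1)) n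
  -- limit of the infinite-product tail
  have hmA : Multipliable fun j : ℕ => 1 - q ^ 4 * (q ^ 4) ^ j :=
    qmultipliable (qnormpow hq1 4 (by omega)) (qnormpow hq1 4 (by omega))
  have hA0 : A ≠ 0 := qPochInf_ne_zero (qnormpow hq1 4 (by omega)) (qnormpow hq1 4 (by omega))
  have hrepr : ∀ n : ℕ, qPochInf (q ^ (4 * n + 4)) (q ^ 4)
      = A / ∏ j ∈ Finset.range n, (1 - q ^ 4 * (q ^ 4) ^ j) := by
    intro n
    have hP0 : (∏ j ∈ Finset.range n, (1 - q ^ 4 * (q ^ 4) ^ j)) ≠ 0 :=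
      Finset.prod_ne_zero_iff.2 fun j _ =>
        qfactor_ne (qnormpow hq1 4 (by omega)) (qnormpow hq1 4 (by omega)).le j
    rw [eq_div_iff hP0, mul_comm, hA]
    exact qrepr hq1 n
  have hAeq : A = ∏' j : ℕ, (1 - q ^ 4 * (q ^ 4) ^ j) := by rw [hA, qPochInf]
  have hPlim : Tendsto (fun n => ∏ j ∈ Finset.range n, (1 - q ^ 4 * (q ^ 4) ^ j))
      atTop (𝓝 A) := by rw [hAeq]; exact hmA.hasProd.tendsto_prod_nat
  have hT : Tendsto (fun n => qPochInf (q ^ (4 * n + 4)) (q ^ 4)) atTop (𝓝 1) := by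
    have h := (tendsto_const_nhds (x := A) (f := atTop (α := ℕ))).div hPlim hA0
    rw [div_self hA0] at h
    exact h.congr fun n => (hrepr n).symm
  -- limit of the finite products
  have hmono : Tendsto (fun n : ℕ => 2 * n + 1) atTop atTop :=
    tendsto_atTop_mono (fun n => by simp only [id_eq]; omega) tendsto_id
  have hR : Tendsto (fun n : ℕ => qPoch q q (2 * n + 1)) atTop (𝓝 L) := by
    have hLeq : L = ∏' j : ℕ, (1 - q * q ^ j) := by rw [hL, qPochInf]
    have hbase : Tendsto (fun m => ∏ j ∈ Finset.range m, (1 - q * q ^ j)) atTop (𝓝 L) := by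
      rw [hLeq]; exact (qmultipliable hq1 hq1).hasProd.tendsto_prod_nat
    exact hbase.comp hmono
  have hx : Tendsto (fun n : ℕ => (1 : ℂ) + q ^ (2 * n)) atTop (𝓝 1) := by
    have h0 : Tendsto (fun n : ℕ => (q ^ 2) ^ n) atTop (𝓝 0) :=
      tendsto_pow_atTop_nhds_zero_of_norm_lt_one (qnormpow hq1 2 (by omega))
    have h1 := (tendsto_const_nhds (x := (1 : ℂ)) (f := atTop (α := ℕ))).add h0
    rw [add_zero] at h1
    exact h1.congr fun n => by rw [← pow_mul]
  have hG : Tendsto (fun n => qPochInf (q ^ (4 * n + 4)) (q ^ 4) * qPoch q q (2 * n + 1))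
      atTop (𝓝 L) := by
    have h := hT.mul hR; rwa [one_mul] at h
  have hFlim : Tendsto F atTop (𝓝 L) := by
    have h := hx.mul hG; rwa [one_mul] at h
  -- summability
  obtain ⟨C, hC⟩ := hG.norm.bddAbove_range
  have hCb : ∀ n : ℕ, ‖qPochInf (q ^ (4 * n + 4)) (q ^ 4) * qPoch q q (2 * n + 1)‖ ≤ C :=
    fun n => hC (Set.mem_range_self n)
  have hsum : Summable f := by
    refine Summable.of_norm_bounded (g := fun n => C * (‖q‖ ^ 2) ^ n)
      ((summable_geometric_of_lt_one (by positivity) (by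
        have := qnormpow hq1 2 (by omega); rwa [norm_pow] at this)).mul_left C) fun n => ?_
    have hnorm : ‖f n‖ = ‖q‖ ^ (2 * n) *
        ‖qPochInf (q ^ (4 * n + 4)) (q ^ 4) * qPoch q q (2 * n + 1)‖ := by
      simp only [hf]
      rw [mul_assoc, norm_mul, norm_pow]
    rw [hnorm, pow_mul, mul_comm]
    exact mul_le_mul_of_nonneg_right (hCb n) (by positivity)
  -- assemble
  have hps := hsum.hasSum.tendsto_sum_nat
  have h1 : Tendsto (fun N => ∑ n ∈ Finset.range N, (1 + q ^ 3) * f n) atTop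
      (𝓝 ((1 + q ^ 3) * ∑' n, f n)) := by
    have h := hps.const_mul (1 + q ^ 3)
    exact h.congr fun N => by rw [Finset.mul_sum]
  have h2 : ∀ N, ∑ n ∈ Finset.range N, (1 + q ^ 3) * f n = F 0 - F N := by
    intro N
    rw [← Finset.sum_range_sub' F N]
    exact Finset.sum_congr rfl fun n _ => key n
  have h4 : Tendsto (fun N => F 0 - F N) atTop (𝓝 (F 0 - L)) :=
    tendsto_const_nhds.sub hFlim
  have h5 : (1 + q ^ 3) * ∑' n, f n = F 0 - L :=
    tendsto_nhds_unique (h1.congr h2) h4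
  have hF0 : F 0 = 2 * ((1 - q) * A) := by
    have hp1 : qPoch q q 1 = 1 - q := by simp [qPoch]
    have e4 : 4 * 0 + 4 = 4 := by norm_num
    have e5 : 2 * 0 + 1 = 1 := by norm_num
    have e6 : 2 * 0 = 0 := by norm_num
    simp only [hF, e4, e5, e6, hp1, pow_zero, ← hA]
    ring
  rw [div_sub_div_same, eq_div_iff h3]
  linear_combination h5 + hF0
end

section
/- For every complex number q with |q| < 1, the following identity holds: Σ_{n≥0} q^{4n+1} · (q^{4n+4}; q^4)_∞ · (q; q)_{2n} = 2q^2(q^4; q^4)_∞/(1+q^3) + q(1−q)(q; q)_∞/(1+q^3). -/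
open Complex Filter Finset Topology

lemma one_sub_ne {z : ℂ} (hz : ‖z‖ < 1) : (1 : ℂ) - z ≠ 0 := by
  intro h
  rw [sub_eq_zero] at h
  rw [← h] at hz
  simp at hz

lemma log_one_sub_norm_le {r : ℝ} (hr : r < 1) {z : ℂ} (hz : ‖z‖ ≤ r) :
    ‖Complex.log (1 - z)‖ ≤ (r * (1 - r)⁻¹ / 2 + 1) * ‖z‖ := by
  have h0 : (0:ℝ) ≤ ‖z‖ := norm_nonneg z
  have hrr : 0 ≤ r := h0.trans hz
  have hz1 : ‖(-z)‖ < 1 := by rw [norm_neg]; exact lt_of_le_of_lt hz hr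
  have hb := Complex.norm_log_one_add_le hz1
  rw [show (1 : ℂ) + -z = 1 - z from by ring, norm_neg] at hb
  refine hb.trans ?_
  have h1 : (1 - ‖z‖)⁻¹ ≤ (1 - r)⁻¹ := by
    apply inv_anti₀ (by linarith) (by linarith)
  have h2 : ‖z‖ * (1 - ‖z‖)⁻¹ ≤ r * (1 - r)⁻¹ := by
    have hi : (0:ℝ) ≤ (1 - ‖z‖)⁻¹ := by
      have : (0:ℝ) < 1 - ‖z‖ := by linarith
      positivity
    apply mul_le_mul hz h1 hi hrr
  have h3 : ‖z‖^2 * (1-‖z‖)⁻¹/2 ≤ r * (1-r)⁻¹/2 * ‖z‖ := by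
    have : ‖z‖^2 * (1-‖z‖)⁻¹ = (‖z‖ * (1-‖z‖)⁻¹) * ‖z‖ := by ring
    rw [this]
    nlinarith [h2, h0]
  nlinarith [h3, h0]

lemma poch_key {r : ℝ} (hr0 : 0 ≤ r) (hr : r < 1) {a w : ℂ}
    (ha : ‖a‖ ≤ r) (hw : ‖w‖ ≤ r) :
    Summable (fun j : ℕ => Complex.log (1 - a * w ^ j)) ∧
      ‖∑' j : ℕ, Complex.log (1 - a * w ^ j)‖ ≤ (r * (1 - r)⁻¹ / 2 + 1) * (1 - r)⁻¹ * ‖a‖ ∧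
      qPochInf a w = Complex.exp (∑' j : ℕ, Complex.log (1 - a * w ^ j)) ∧
      HasProd (fun j : ℕ => 1 - a * w ^ j) (qPochInf a w) := by
  have h1r : (0:ℝ) < 1 - r := by linarith
  set C := r * (1 - r)⁻¹ / 2 + 1 with hC
  have hC0 : 0 ≤ C := by positivity
  have hzr : ∀ j : ℕ, ‖a * w ^ j‖ ≤ r := by
    intro j
    rw [norm_mul, norm_pow]
    calc ‖a‖ * ‖w‖ ^ j ≤ r * 1 := by
          apply mul_le_mul ha (pow_le_one₀ (norm_nonneg w) (hw.trans hr.le)) (by positivity) hr0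
      _ = r := mul_one r
  have hlog : ∀ j : ℕ, ‖Complex.log (1 - a * w ^ j)‖ ≤ C * ‖a‖ * r ^ j := by
    intro j
    refine (log_one_sub_norm_le hr (hzr j)).trans ?_
    rw [norm_mul, norm_pow]
    calc C * (‖a‖ * ‖w‖ ^ j) ≤ C * (‖a‖ * r ^ j) := by
          apply mul_le_mul_of_nonneg_left _ hC0
          apply mul_le_mul_of_nonneg_left _ (norm_nonneg a)
          exact pow_le_pow_left₀ (norm_nonneg w) hw j
      _ = C * ‖a‖ * r ^ j := by ring
  have hgeom : Summable (fun j : ℕ => C * ‖a‖ * r ^ j) :=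
    (summable_geometric_of_lt_one hr0 hr).mul_left _
  have hsum : Summable (fun j : ℕ => Complex.log (1 - a * w ^ j)) :=
    Summable.of_norm_bounded hgeom hlog
  have hne : ∀ j : ℕ, (1 : ℂ) - a * w ^ j ≠ 0 := fun j => one_sub_ne (lt_of_le_of_lt (hzr j) hr)
  have hprod : HasProd (fun j : ℕ => 1 - a * w ^ j)
      (Complex.exp (∑' j : ℕ, Complex.log (1 - a * w ^ j))) := by
    have h1 := hsum.hasSum.cexp
    have h2 : (Complex.exp ∘ fun j : ℕ => Complex.log (1 - a * w ^ j)) =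
        fun j : ℕ => 1 - a * w ^ j := funext fun j => Complex.exp_log (hne j)
    rwa [h2] at h1
  have heq : qPochInf a w = Complex.exp (∑' j : ℕ, Complex.log (1 - a * w ^ j)) := hprod.tprod_eq
  refine ⟨hsum, ?_, heq, heq ▸ hprod⟩
  have hnorm : Summable (fun j : ℕ => ‖Complex.log (1 - a * w ^ j)‖) :=
    Summable.of_nonneg_of_le (fun j => norm_nonneg _) hlog hgeom
  refine (norm_tsum_le_tsum_norm hnorm).trans ?_
  calc ∑' j : ℕ, ‖Complex.log (1 - a * w ^ j)‖ ≤ ∑' j : ℕ, C * ‖a‖ * r ^ j :=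
        Summable.tsum_le_tsum hlog hnorm hgeom
    _ = C * ‖a‖ * (1 - r)⁻¹ := by rw [tsum_mul_left, tsum_geometric_of_lt_one hr0 hr]
    _ = C * (1 - r)⁻¹ * ‖a‖ := by ring

set_option maxHeartbeats 1000000 in
theorem stmt_4 (q : ℂ) (hq : ‖q‖ < 1) :
    ∑' n : ℕ, q ^ (4 * n + 1) * qPochInf (q ^ (4 * n + 4)) (q ^ 4) * qPoch q q (2 * n) =
      2 * q ^ 2 * qPochInf (q ^ 4) (q ^ 4) / (1 + q ^ 3) +
        q * (1 - q) * qPochInf q q / (1 + q ^ 3) := by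
  have hr : ‖q‖ < 1 := by exact hq
  set r : ℝ := ‖q‖ with hrdef
  have hr0 : 0 ≤ r := norm_nonneg q
  have h1r : (0:ℝ) < 1 - r := by linarith
  have hqm : ∀ m : ℕ, 1 ≤ m → ‖q ^ m‖ ≤ r := by
    intro m hm
    rw [norm_pow]
    exact pow_le_of_le_one hr0 hr.le (by omega)
  have h3 : (1 : ℂ) + q ^ 3 ≠ 0 := by
    intro h
    have h1 : q ^ 3 = -1 := by linear_combination h
    have h2 := hqm 3 (by norm_num)
    rw [h1] at h2
    simp at h2
    linarith
  set K : ℝ := (r * (1 - r)⁻¹ / 2 + 1) * (1 - r)⁻¹ with hK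
  have hK0 : 0 ≤ K := by positivity
  -- key facts for the base-q⁴ products
  have hkey : ∀ m : ℕ, 1 ≤ m →
      Summable (fun j : ℕ => Complex.log (1 - q ^ m * (q ^ 4) ^ j)) ∧
      ‖∑' j : ℕ, Complex.log (1 - q ^ m * (q ^ 4) ^ j)‖ ≤ K * ‖q ^ m‖ ∧
      qPochInf (q ^ m) (q ^ 4) = Complex.exp (∑' j : ℕ, Complex.log (1 - q ^ m * (q ^ 4) ^ j)) ∧
      HasProd (fun j : ℕ => 1 - q ^ m * (q ^ 4) ^ j) (qPochInf (q ^ m) (q ^ 4)) := by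
    intro m hm
    have := poch_key hr0 hr (hqm m hm) (hqm 4 (by norm_num))
    exact this
  -- key facts for the base-q product
  have hkeyq := poch_key hr0 hr (le_refl ‖q‖) (le_refl ‖q‖)
  -- shifting the product index
  have hshift : ∀ n : ℕ, (fun j : ℕ => 1 - q ^ (4*n+4) * (q ^ 4) ^ (j+1)) =
      (fun j : ℕ => 1 - q ^ (4*n+8) * (q ^ 4) ^ j) := by
    intro n
    funext j
    simp only [← pow_mul, ← pow_add]
    rw [show 4*n+4+4*(j+1) = 4*n+8+4*j from by ring]
  have hpeel : ∀ n : ℕ, qPochInf (q ^ (4*n+4)) (q ^ 4) =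
      (1 - q ^ (4*n+4)) * qPochInf (q ^ (4*n+8)) (q ^ 4) := by
    intro n
    have hm : Multipliable (fun j : ℕ => 1 - q ^ (4*n+4) * (q ^ 4) ^ (j+1)) := by
      rw [hshift n]
      exact ⟨_, (hkey (4*n+8) (by omega)).2.2.2⟩
    have hz := tprod_eq_zero_mul' (f := fun j : ℕ => 1 - q ^ (4*n+4) * (q ^ 4) ^ j) hm
    simp only [qPochInf]
    rw [hz]
    simp only [pow_zero, mul_one]
    rw [hshift n]
  have hpoch : ∀ n : ℕ, qPoch q q (2*(n+1)) =
      qPoch q q (2*n) * (1 - q * q ^ (2*n)) * (1 - q * q ^ (2*n+1)) := by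
    intro n
    simp only [qPoch]
    rw [show 2*(n+1) = (2*n+1)+1 from by ring, Finset.prod_range_succ, Finset.prod_range_succ]
  -- the telescoping function
  set G : ℕ → ℂ := fun n =>
    (q^2 - q + q^2 * (q^n)^2 + q * (q^n)^4) * qPochInf (q ^ (4*n+4)) (q ^ 4) * qPoch q q (2*n)
      / (1 + q^3) with hG
  have hts : ∀ n : ℕ, q ^ (4*n+1) * qPochInf (q ^ (4*n+4)) (q ^ 4) * qPoch q q (2*n) =
      G n - G (n+1) := by
    intro n
    simp only [hG]
    rw [show 4*(n+1)+4 = 4*n+8 from by ring, hpoch n, hpeel n, div_sub_div_same,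
      eq_div_iff h3]
    ring
  -- uniform bounds
  have hAle : ∀ n : ℕ, ‖qPochInf (q ^ (4*n+4)) (q ^ 4)‖ ≤ Real.exp K := by
    intro n
    obtain ⟨-, hb, he, -⟩ := hkey (4*n+4) (by omega)
    rw [he, Complex.norm_exp]
    apply Real.exp_le_exp.mpr
    refine (Complex.re_le_norm _).trans ?_
    refine hb.trans ?_
    calc K * ‖q ^ (4*n+4)‖ ≤ K * 1 := by
          apply mul_le_mul_of_nonneg_left _ hK0
          exact (hqm _ (by omega)).trans hr.le
      _ = K := mul_one K
  have hBle : ∀ m : ℕ, ‖qPoch q q m‖ ≤ Real.exp ((1 - r)⁻¹) := by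
    intro m
    have hsg : Summable (fun j : ℕ => r ^ (j+1)) := by
      refine ((summable_geometric_of_lt_one hr0 hr).mul_left r).congr fun j => ?_
      rw [← pow_succ']
    simp only [qPoch]
    rw [norm_prod]
    calc ∏ j ∈ range m, ‖1 - q * q ^ j‖ ≤ ∏ j ∈ range m, Real.exp (r ^ (j+1)) := by
          apply Finset.prod_le_prod (fun _ _ => norm_nonneg _)
          intro j _
          have h1 : ‖(1:ℂ) - q * q ^ j‖ ≤ 1 + r ^ (j+1) := by
            refine (norm_sub_le _ _).trans ?_
            rw [norm_one, norm_mul, norm_pow, ← pow_succ']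
          have h2 := Real.add_one_le_exp (r ^ (j+1))
          linarith
      _ = Real.exp (∑ j ∈ range m, r ^ (j+1)) := (Real.exp_sum _ _).symm
      _ ≤ Real.exp ((1 - r)⁻¹) := by
          apply Real.exp_le_exp.mpr
          refine (Summable.sum_le_tsum (range m) (fun i _ => by positivity) hsg).trans ?_
          have h4 : ∑' j : ℕ, r ^ (j+1) = r * (1 - r)⁻¹ := by
            have he : (fun j : ℕ => r ^ (j+1)) = fun j : ℕ => r * r ^ j :=
              funext fun j => by rw [← pow_succ']
            rw [he, tsum_mul_left, tsum_geometric_of_lt_one hr0 hr]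
          rw [h4]
          nlinarith [inv_nonneg.mpr h1r.le]
  -- summability of the series
  have hsummt : Summable (fun n : ℕ =>
      q ^ (4*n+1) * qPochInf (q ^ (4*n+4)) (q ^ 4) * qPoch q q (2*n)) := by
    set E : ℝ := Real.exp K * Real.exp ((1 - r)⁻¹) with hE
    have hE0 : 0 ≤ E := by positivity
    apply Summable.of_norm_bounded (g := fun n : ℕ => r ^ (4*n+1) * E)
    · have hs : Summable (fun n : ℕ => (r^4) ^ n * (r * E)) :=
        (summable_geometric_of_lt_one (by positivity) (pow_lt_one₀ hr0 hr (by norm_num))).mul_right _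
      refine hs.congr fun n => ?_
      rw [← pow_mul]
      ring
    · intro n
      rw [norm_mul, norm_mul, norm_pow]
      calc ‖q‖ ^ (4*n+1) * ‖qPochInf (q ^ (4*n+4)) (q ^ 4)‖ * ‖qPoch q q (2*n)‖
          ≤ r ^ (4*n+1) * Real.exp K * Real.exp ((1 - r)⁻¹) := by
            gcongr
            · exact hAle n
            · exact hBle (2*n)
        _ = r ^ (4*n+1) * E := by rw [hE]; ring
  -- limits
  have hXlim : Tendsto (fun n : ℕ => q ^ n) atTop (𝓝 0) :=
    tendsto_pow_atTop_nhds_zero_of_norm_lt_one hr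
  have hrlim : Tendsto (fun n : ℕ => r ^ (4*n+4)) atTop (𝓝 0) := by
    have base : Tendsto (fun m : ℕ => r ^ m) atTop (𝓝 0) :=
      tendsto_pow_atTop_nhds_zero_of_lt_one hr0 hr
    exact base.comp (tendsto_atTop_mono (fun n => by simp only [id_eq]; omega : ∀ n : ℕ, id n ≤ 4*n+4) tendsto_id)
  have hAlim : Tendsto (fun n : ℕ => qPochInf (q ^ (4*n+4)) (q ^ 4)) atTop (𝓝 1) := by
    have hS : Tendsto (fun n : ℕ => ∑' j : ℕ, Complex.log (1 - q ^ (4*n+4) * (q ^ 4) ^ j))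
        atTop (𝓝 0) := by
      refine squeeze_zero_norm (a := fun n : ℕ => K * r ^ (4*n+4)) (fun n => ?_) ?_
      · 
        refine ((hkey (4*n+4) (by omega)).2.1).trans ?_
        rw [norm_pow]
      · simpa using hrlim.const_mul K
    have hexp := (Complex.continuous_exp.tendsto 0).comp hS
    rw [Complex.exp_zero] at hexp
    refine Tendsto.congr (fun n => ?_) hexp
    exact ((hkey (4*n+4) (by omega)).2.2.1).symm
  have hBlim : Tendsto (fun n : ℕ => qPoch q q (2*n)) atTop (𝓝 (qPochInf q q)) := by
    have hp : HasProd (fun j : ℕ => 1 - q * q ^ j) (qPochInf q q) := hkeyq.2.2.2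
    have h2 : Tendsto (fun n : ℕ => 2*n) atTop atTop :=
      tendsto_atTop_mono (fun n => by simp only [id_eq]; omega : ∀ n : ℕ, id n ≤ 2*n) tendsto_id
    exact hp.tendsto_prod_nat.comp h2
  have hGlim : Tendsto G atTop (𝓝 ((q^2 - q) * 1 * qPochInf q q / (1 + q^3))) := by
    have hc2 : Tendsto (fun n : ℕ => q^2 * (q^n)^2) atTop (𝓝 0) := by
      simpa using (hXlim.pow 2).const_mul (q^2)
    have hc4 : Tendsto (fun n : ℕ => q * (q^n)^4) atTop (𝓝 0) := by
      simpa using (hXlim.pow 4).const_mul q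
    have hcoef : Tendsto (fun n : ℕ => q^2 - q + q^2*(q^n)^2 + q*(q^n)^4) atTop (𝓝 (q^2 - q)) := by
      have := ((tendsto_const_nhds (x := q^2 - q)).add hc2).add hc4
      simpa using this
    simpa only [hG] using ((hcoef.mul hAlim).mul hBlim).div_const (1 + q^3)
  -- assembling
  have hps : ∀ N : ℕ, ∑ n ∈ range N,
      (q ^ (4*n+1) * qPochInf (q ^ (4*n+4)) (q ^ 4) * qPoch q q (2*n)) = G 0 - G N := by
    intro N
    rw [Finset.sum_congr rfl (fun n _ => hts n)]
    exact Finset.sum_range_sub' G N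
  have hT1 : Tendsto (fun N : ℕ => ∑ n ∈ range N,
      (q ^ (4*n+1) * qPochInf (q ^ (4*n+4)) (q ^ 4) * qPoch q q (2*n))) atTop
      (𝓝 (G 0 - (q^2 - q) * 1 * qPochInf q q / (1 + q^3))) := by
    refine Tendsto.congr (fun N => (hps N).symm) ?_
    exact tendsto_const_nhds.sub hGlim
  have hT2 := hsummt.hasSum.tendsto_sum_nat
  have hmain := tendsto_nhds_unique hT2 hT1
  rw [hmain]
  simp only [hG]
  norm_num [qPoch]
  field_simp
  ring
end
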